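/- Let λ > −1/2 with λ ≠ 0 and let n ≥ 2 be an integer. Then for every x > 0 the derivative of the normalized Turán function has the sign of λ: λ · φ_{n,λ}′(x) > 0; equivalently, φ_{n,λ} is strictly increasing on [0, ∞) when λ > 0 and strictly decreasing on [0, ∞) when −1/2 < λ < 0. -/

import Mathlib

open Polynomial

set_option maxHeartbeats 4000000

noncomputable def Ebar (l : ℝ) (p : ℕ → Polynomial ℝ) (m : ℕ) : Polynomial ℝ :=
  C ((m : ℝ) * ((m : ℝ) + 2 * l)) * (p m) ^ 2 + (1 - X ^ 2) * (derivative (p m)) ^ 2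

noncomputable def Phi (l : ℝ) (p : ℕ → Polynomial ℝ) : ℕ → Polynomial ℝ
  | 0 => 1
  | 1 => C (1 / (1 + 2 * l))
  | (m + 2) =>
      C (2 * ((m : ℝ) + 1 + l) / (((m : ℝ) + 1 + 2 * l) ^ 2 * ((m : ℝ) + 2 + 2 * l) * ((m : ℝ) + 1)))
          * Ebar l p (m + 1)
        + C (((m : ℝ) + 1) * (m : ℝ) / (((m : ℝ) + 1 + 2 * l) * ((m : ℝ) + 2 + 2 * l))) * Phi l p m

/-- For `l > -1/2`, `l ≠ 0`, `n ≥ 2`, and any `x > 0`, the derivative of the normalized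
Turán function has the sign of `l`: `l * φ′(x) > 0`. -/
theorem turan_normalized_derivative_sign
    (l : ℝ) (hl : -(1/2 : ℝ) < l) (hl0 : l ≠ 0) (n : ℕ) (hn : 2 ≤ n)
    (p : ℕ → Polynomial ℝ)
    (hp0 : p 0 = 1) (hp1 : p 1 = Polynomial.X)
    (hrec : ∀ m : ℕ, 1 ≤ m → ∀ x : ℝ,
      ((m : ℝ) + 2 * l) * (p (m + 1)).eval x
        = 2 * ((m : ℝ) + l) * x * (p m).eval x - (m : ℝ) * (p (m - 1)).eval x)
    (φ : Polynomial ℝ)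
    (hφ : ∀ x : ℝ, (1 - x ^ 2) * φ.eval x
        = ((p n).eval x) ^ 2 - (p (n - 1)).eval x * (p (n + 1)).eval x) :
    ∀ x : ℝ, 0 < x → 0 < l * (Polynomial.derivative φ).eval x := by
  have hl1 : (0:ℝ) < 1 + 2 * l := by linarith
  -- pointwise normalized recurrence
  have hR : ∀ (k : ℕ) (x : ℝ), ((k : ℝ) + 1 + 2 * l) * (p (k + 2)).eval x
      = 2 * ((k : ℝ) + 1 + l) * x * (p (k + 1)).eval x - ((k : ℝ) + 1) * (p k).eval x := by
    intro k x
    have h := hrec (k + 1) (by omega) x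
    push_cast at h
    simpa [Nat.add_sub_cancel] using h
  -- polynomial recurrence
  have hRP : ∀ k : ℕ, C ((k : ℝ) + 1 + 2 * l) * p (k + 2)
      = C (2 * ((k : ℝ) + 1 + l)) * (X * p (k + 1)) - C ((k : ℝ) + 1) * p k := by
    intro k
    refine Polynomial.funext fun x => ?_
    simp only [eval_mul, eval_sub, eval_C, eval_X]
    linear_combination hR k x
  -- derivative of recurrence, pointwise
  have hdR : ∀ (k : ℕ) (x : ℝ), ((k : ℝ) + 1 + 2 * l) * (derivative (p (k + 2))).eval x
      = 2 * ((k : ℝ) + 1 + l) * ((p (k + 1)).eval x + x * (derivative (p (k + 1))).eval x)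
        - ((k : ℝ) + 1) * (derivative (p k)).eval x := by
    intro k x
    have h := congrArg (fun q => (derivative q).eval x) (hRP k)
    simp only [derivative_mul, derivative_sub, derivative_C, derivative_X, zero_mul, one_mul,
      eval_add, eval_mul, eval_sub, eval_C, eval_X, zero_add, eval_zero, mul_zero, zero_sub,
      sub_zero] at h
    linear_combination h
  -- (D2):  (1-x^2) p_m' = (m+2l)(x p_m - p_{m+1})
  have hD2 : ∀ (m : ℕ) (x : ℝ), (1 - x ^ 2) * (derivative (p m)).eval x
      = ((m : ℝ) + 2 * l) * (x * (p m).eval x - (p (m + 1)).eval x) := by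
    have key : ∀ m : ℕ,
        (∀ x : ℝ, (1 - x ^ 2) * (derivative (p m)).eval x
          = ((m : ℝ) + 2 * l) * (x * (p m).eval x - (p (m + 1)).eval x)) ∧
        (∀ x : ℝ, (1 - x ^ 2) * (derivative (p (m + 1))).eval x
          = ((m : ℝ) + 1 + 2 * l) * (x * (p (m + 1)).eval x - (p (m + 2)).eval x)) := by
      intro m
      induction m with
      | zero =>
        constructor
        · intro x
          simp [hp0, hp1]

        · intro x
          have h0 := hR 0 x
          rw [hp0, hp1] at h0
          simp only [eval_one, eval_X] at h0
          simp only [hp1, derivative_X, eval_one, Nat.cast_zero, Nat.cast_one, eval_X]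
          push_cast at h0 ⊢
          linear_combination h0
      | succ m ih =>
        obtain ⟨ih1, ih2⟩ := ih
        constructor
        · intro x
          push_cast
          exact ih2 x
        · intro x
          have hpos : (0:ℝ) < (m : ℝ) + 1 + 2 * l := by
            have := Nat.cast_nonneg (α := ℝ) m
            linarith
          refine mul_left_cancel₀ (ne_of_gt hpos) ?_
          have h4 := hR m x
          have h5 := hR (m + 1) x
          push_cast at h5 ⊢
          linear_combination (1 - x^2) * (hdR m x) + 2 * ((m:ℝ) + 1 + l) * x * (ih2 x)
            - ((m:ℝ) + 1) * (ih1 x) - ((m:ℝ) + 2*l) * x * h4 + ((m:ℝ) + 1 + 2*l) * h5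
    intro m
    exact (key m).1
  have hOneX2 : (1 - X ^ 2 : Polynomial ℝ) ≠ 0 := by
    intro h
    have := congrArg (eval 0) h
    simp at this
  -- polynomial-level D2
  have hD2P : ∀ m : ℕ, (1 - X ^ 2) * derivative (p m)
      = C ((m : ℝ) + 2 * l) * (X * p m - p (m + 1)) := by
    intro m
    refine Polynomial.funext fun x => ?_
    simp only [eval_mul, eval_sub, eval_one, eval_pow, eval_C, eval_X]
    linear_combination hD2 m x
  -- derivative of D2, pointwise
  have hdD2 : ∀ (m : ℕ) (x : ℝ), (-2*x) * (derivative (p m)).eval x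
        + (1 - x ^ 2) * (derivative (derivative (p m))).eval x
      = ((m : ℝ) + 2 * l) * ((p m).eval x + x * (derivative (p m)).eval x
          - (derivative (p (m + 1))).eval x) := by
    intro m x
    have h := congrArg (fun q => (derivative q).eval x) (hD2P m)
    simp only [derivative_mul, derivative_sub, derivative_C, derivative_X, derivative_one,
      derivative_pow, derivative_X_pow, eval_add, eval_mul, eval_sub, eval_C, eval_X, eval_one,
      eval_pow, zero_mul, one_mul, mul_one, zero_add, zero_sub, sub_zero, eval_zero, mul_zero,
      eval_neg, Nat.cast_ofNat, pow_one] at h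
    linear_combination h
  -- the ODE
  have hODE : ∀ (m : ℕ) (x : ℝ), (1 - x ^ 2) * (derivative (derivative (p m))).eval x
      = (2 * l + 1) * x * (derivative (p m)).eval x
        - (m : ℝ) * ((m : ℝ) + 2 * l) * (p m).eval x := by
    intro m
    have H : (1 - X ^ 2) * ((1 - X ^ 2) * derivative (derivative (p m)))
        = (1 - X ^ 2) * (C (2 * l + 1) * (X * derivative (p m))
            - C ((m : ℝ) * ((m : ℝ) + 2 * l)) * p m) := by
      refine Polynomial.funext fun x => ?_
      have h5 := hR m x
      have h6 := hD2 (m+1) x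
      push_cast at h5 h6
      simp only [eval_mul, eval_sub, eval_one, eval_pow, eval_C, eval_X]
      linear_combination (1 - x^2) * (hdD2 m x) + ((m:ℝ) + 1) * x * (hD2 m x)
        - ((m:ℝ) + 2*l) * h6 + ((m:ℝ) + 2*l) * h5
    have H2 := mul_left_cancel₀ hOneX2 H
    intro x
    have := congrArg (eval x) H2
    simp only [eval_mul, eval_sub, eval_one, eval_pow, eval_C, eval_X] at this
    linear_combination this
  -- derivative of Ebar
  have hEder : ∀ (m : ℕ) (x : ℝ), (derivative (Ebar l p m)).eval x
      = 4 * l * x * ((derivative (p m)).eval x) ^ 2 := by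
    intro m x
    simp only [Ebar, derivative_add, derivative_mul, derivative_sub, derivative_one,
      derivative_C, derivative_pow, derivative_X_pow, derivative_X, eval_add, eval_mul, eval_sub, eval_C,
      eval_X, eval_one, eval_pow, zero_mul, one_mul, mul_one, zero_add, zero_sub, sub_zero,
      eval_zero, mul_zero, eval_neg, Nat.cast_ofNat, pow_one]
    linear_combination 2 * (derivative (p m)).eval x * (hODE m x)
  -- (1-x^2) * Ebar_m = (m+2l) * G_m
  have hGid : ∀ (m : ℕ) (x : ℝ), (1 - x ^ 2) * (Ebar l p m).eval x
      = ((m : ℝ) + 2 * l) * ((m : ℝ) * (1 - x ^ 2) * ((p m).eval x) ^ 2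
          + ((m : ℝ) + 2 * l) * (x * (p m).eval x - (p (m + 1)).eval x) ^ 2) := by
    intro m x
    simp only [Ebar, eval_add, eval_mul, eval_sub, eval_C, eval_X, eval_one, eval_pow]
    linear_combination ((1 - x^2) * (derivative (p m)).eval x
      + ((m:ℝ) + 2*l) * (x * (p m).eval x - (p (m+1)).eval x)) * (hD2 m x)
  -- master identity (M)
  have hM : ∀ (m : ℕ) (x : ℝ),
      ((m:ℝ) + 2) * ((m:ℝ) + 2 + 2*l) * ((m:ℝ) + 3 + 2*l)
          * (((p (m+3)).eval x) ^ 2 - (p (m+2)).eval x * (p (m+4)).eval x)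
      = 2 * ((m:ℝ) + 2 + l) * (((m:ℝ) + 2) * (1 - x^2) * ((p (m+2)).eval x) ^ 2
          + ((m:ℝ) + 2 + 2*l) * (x * (p (m+2)).eval x - (p (m+3)).eval x) ^ 2)
        + ((m:ℝ) + 2) ^ 2 * ((m:ℝ) + 1)
          * (((p (m+1)).eval x) ^ 2 - (p m).eval x * (p (m+2)).eval x) := by
    intro m x
    have h1 := hR m x
    have h2 := hR (m+1) x
    have h3 := hR (m+2) x
    push_cast at h1 h2 h3
    linear_combination (((m:ℝ)+2)^2 * (p (m+2)).eval x) * h1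
      + (-(((m:ℝ)+2) * ((m:ℝ)+1) * (p (m+1)).eval x) + 2*l*x*(p (m+2)).eval x
          + ((m:ℝ)+1) * ((m:ℝ)+2+2*l) * (p (m+3)).eval x) * h2
      + (-(((m:ℝ)+2) * ((m:ℝ)+2+2*l) * (p (m+2)).eval x)) * h3
  -- Phi represents the normalized Turán determinant
  have hPhiId : ∀ (m : ℕ) (x : ℝ), (1 - x ^ 2) * (Phi l p (m + 1)).eval x
      = ((p (m + 1)).eval x) ^ 2 - (p m).eval x * (p (m + 2)).eval x := by
    set A : ℕ → Prop := fun j => ∀ x : ℝ, (1 - x ^ 2) * (Phi l p (j + 1)).eval x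
      = ((p (j + 1)).eval x) ^ 2 - (p j).eval x * (p (j + 2)).eval x with hA
    have key : ∀ m : ℕ, A m ∧ A (m + 1) := by
      intro m
      induction m with
      | zero =>
        constructor
        · intro x
          simp only [Phi, eval_C, hp0, hp1, eval_one, eval_X]
          have h0 := hR 0 x
          rw [hp0, hp1] at h0
          simp only [eval_one, eval_X] at h0
          push_cast at h0
          have hne : (1 + 2*l) ≠ 0 := ne_of_gt hl1
          field_simp
          linear_combination h0
        · intro x
          show (1 - x ^ 2) * (Phi l p 2).eval x = _
          have hunf : Phi l p 2
              = C (2 * ((0 : ℝ) + 1 + l) / (((0 : ℝ) + 1 + 2 * l) ^ 2 * ((0 : ℝ) + 2 + 2 * l) * ((0 : ℝ) + 1)))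
                  * Ebar l p 1
                + C (((0 : ℝ) + 1) * (0 : ℝ) / (((0 : ℝ) + 1 + 2 * l) * ((0 : ℝ) + 2 + 2 * l))) * Phi l p 0 := by
            simp only [Phi]
            norm_num
          rw [hunf]
          simp only [eval_add, eval_mul, eval_C]
          have h22 : (0:ℝ) < 2 + 2*l := by linarith
          have hD2fac : ((1:ℝ) + 2*l)^2 * (2 + 2*l) ≠ 0 :=
            ne_of_gt (mul_pos (by positivity) h22)
          refine mul_left_cancel₀ hD2fac ?_
          have hA2 : (2 * ((0 : ℝ) + 1 + l) / (((0 : ℝ) + 1 + 2 * l) ^ 2 * ((0 : ℝ) + 2 + 2 * l) * ((0 : ℝ) + 1)))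
              * (((1:ℝ) + 2*l)^2 * (2 + 2*l)) = 2 * (1 + l) := by
            have hne : (1 + 2*l) ≠ 0 := ne_of_gt hl1
            have hne2 : (2 + 2*l) ≠ 0 := ne_of_gt h22
            rw [div_mul_eq_mul_div, div_eq_iff (by simp only [zero_add, mul_one]; exact mul_ne_zero (pow_ne_zero 2 hne) hne2)]
            try ring
            try exact Or.inl (by ring)
          have hg := hGid 1 x
          rw [hp1] at hg
          simp only [eval_X] at hg
          push_cast at hg
          have h0 := hR 0 x
          rw [hp0, hp1] at h0
          simp only [eval_one, eval_X] at h0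
          have h1 := hR 1 x
          rw [hp1] at h1
          simp only [eval_X] at h1
          push_cast at h0 h1
          simp only [show (0:ℕ)+1 = 1 from rfl, show (0:ℕ)+1+2 = 3 from rfl, hp1, eval_X]
          linear_combination ((1 - x^2) * (Ebar l p 1).eval x) * hA2 + 2*(1+l) * hg
            - (1+2*l)*2*l*x^2 * h0 + (1+2*l)^2*x * h1
      | succ m ih =>
        obtain ⟨ih1, ih2⟩ := ih
        refine ⟨ih2, ?_⟩
        intro x
        have hunf : Phi l p (m + 1 + 1 + 1)
            = C (2 * ((m : ℝ) + 2 + l) / (((m : ℝ) + 2 + 2 * l) ^ 2 * ((m : ℝ) + 3 + 2 * l) * ((m : ℝ) + 2)))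
                * Ebar l p (m + 2)
              + C (((m : ℝ) + 2) * ((m : ℝ) + 1) / (((m : ℝ) + 2 + 2 * l) * ((m : ℝ) + 3 + 2 * l)))
                * Phi l p (m + 1) := by
          show Phi l p ((m + 1) + 2) = _
          simp only [Phi]
          push_cast
          ring_nf
        rw [hunf]
        simp only [eval_add, eval_mul, eval_C]
        have hm0 : (0:ℝ) ≤ (m:ℝ) := Nat.cast_nonneg m
        have hf1 : (0:ℝ) < (m:ℝ) + 2 := by linarith
        have hf2 : (0:ℝ) < (m:ℝ) + 2 + 2*l := by linarith
        have hf3 : (0:ℝ) < (m:ℝ) + 3 + 2*l := by linarith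
        have hDfac : ((m:ℝ) + 2) * (((m:ℝ) + 2 + 2*l)^2 * ((m:ℝ) + 3 + 2*l)) ≠ 0 := by positivity
        refine mul_left_cancel₀ hDfac ?_
        have hA3 : (2 * ((m : ℝ) + 2 + l) / (((m : ℝ) + 2 + 2 * l) ^ 2 * ((m : ℝ) + 3 + 2 * l) * ((m : ℝ) + 2)))
            * (((m:ℝ) + 2) * (((m:ℝ) + 2 + 2*l)^2 * ((m:ℝ) + 3 + 2*l))) = 2 * ((m:ℝ) + 2 + l) := by
          field_simp
          try ring
          try exact Or.inl (by ring)
        have hB3 : ((((m:ℝ) + 2) * ((m:ℝ) + 1)) / (((m:ℝ) + 2 + 2 * l) * ((m:ℝ) + 3 + 2 * l)))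
            * (((m:ℝ) + 2) * (((m:ℝ) + 2 + 2*l)^2 * ((m:ℝ) + 3 + 2*l)))
            = ((m:ℝ) + 2)^2 * ((m:ℝ) + 1) * ((m:ℝ) + 2 + 2*l) := by
          field_simp
          try ring
          try exact Or.inl (by ring)
        have hg := hGid (m + 2) x
        push_cast at hg
        have hm := hM m x
        linear_combination ((1 - x^2) * (Ebar l p (m + 2)).eval x) * hA3
          + ((1 - x^2) * (Phi l p (m + 1)).eval x) * hB3
          + 2*((m:ℝ)+2+l) * hg
          + ((m:ℝ)+2)^2 * ((m:ℝ)+1) * ((m:ℝ)+2+2*l) * (ih1 x)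
          - ((m:ℝ)+2+2*l) * hm
    intro m
    exact (key m).1
  -- derivative of Phi at indices k+2, evaluated
  have hPder : ∀ (k : ℕ) (x : ℝ), (derivative (Phi l p (k + 2))).eval x
      = (2 * ((k : ℝ) + 1 + l) / (((k : ℝ) + 1 + 2 * l) ^ 2 * ((k : ℝ) + 2 + 2 * l) * ((k : ℝ) + 1)))
          * (4 * l * x * ((derivative (p (k + 1))).eval x) ^ 2)
        + (((k : ℝ) + 1) * (k : ℝ) / (((k : ℝ) + 1 + 2 * l) * ((k : ℝ) + 2 + 2 * l)))
          * (derivative (Phi l p k)).eval x := by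
    intro k x
    simp only [Phi, derivative_add, derivative_C_mul, eval_add, eval_mul, eval_C]
    rw [hEder (k + 1) x]
  -- positivity of the derivative of Phi
  have hPhiD : ∀ (m : ℕ) (x : ℝ), 0 < x → 0 < l * (derivative (Phi l p (m + 2))).eval x := by
    have hl2 : (0:ℝ) < l ^ 2 := by positivity
    set B : ℕ → Prop := fun j => ∀ x : ℝ, 0 < x → 0 < l * (derivative (Phi l p (j + 2))).eval x
      with hB
    have key : ∀ m : ℕ, B m ∧ B (m + 1) := by
      intro m
      induction m with
      | zero =>
        constructor
        · intro x hx
          have h := hPder 0 x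
          have hz : (derivative (Phi l p 0)).eval x = 0 := by
            simp [Phi]
          rw [hz, mul_zero, add_zero, show (0:ℕ) + 1 = 1 from rfl, hp1, derivative_X, eval_one] at h
          rw [h]
          have hd1 : (0:ℝ) < ((0:ℝ) + 1 + 2 * l) ^ 2 * ((0:ℝ) + 2 + 2 * l) * ((0:ℝ) + 1) := by
            have hb : (0:ℝ) < (0:ℝ) + 1 + 2 * l := by linarith
            have hc : (0:ℝ) < (0:ℝ) + 2 + 2 * l := by linarith
            exact mul_pos (mul_pos (pow_pos hb 2) hc) (by norm_num)
          have hcA : (0:ℝ) < 2 * ((0:ℝ) + 1 + l) / (((0:ℝ) + 1 + 2 * l) ^ 2 * ((0:ℝ) + 2 + 2 * l) * ((0:ℝ) + 1)) :=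
            div_pos (by linarith) hd1
          nlinarith [mul_pos (mul_pos hl2 hx) hcA]
        · intro x hx
          simp only [Nat.zero_add]
          have h := hPder 1 x
          have hz : (derivative (Phi l p 1)).eval x = 0 := by
            simp [Phi]
          rw [hz, mul_zero, add_zero] at h
          rw [h]
          have hg2 := hdR 0 x
          rw [hp0, hp1] at hg2
          simp only [derivative_one, derivative_X, eval_zero, eval_one, eval_X, Nat.cast_zero] at hg2
          have hg2pos : 0 < (derivative (p 2)).eval x := by nlinarith
          have hd1 : (0:ℝ) < ((1:ℝ) + 1 + 2 * l) ^ 2 * ((1:ℝ) + 2 + 2 * l) * ((1:ℝ) + 1) := by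
            have hb : (0:ℝ) < (1:ℝ) + 1 + 2 * l := by linarith
            have hc : (0:ℝ) < (1:ℝ) + 2 + 2 * l := by linarith
            exact mul_pos (mul_pos (pow_pos hb 2) hc) (by norm_num)
          have hcA : (0:ℝ) < 2 * ((1:ℝ) + 1 + l) / (((1:ℝ) + 1 + 2 * l) ^ 2 * ((1:ℝ) + 2 + 2 * l) * ((1:ℝ) + 1)) :=
            div_pos (by linarith) hd1
          have hcast : ((1:ℕ) : ℝ) = (1:ℝ) := by norm_num
          rw [hcast]
          nlinarith [mul_pos (mul_pos (mul_pos hl2 hx) hcA) (mul_pos hg2pos hg2pos)]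
      | succ m ih =>
        obtain ⟨ih1, ih2⟩ := ih
        refine ⟨ih2, ?_⟩
        intro x hx
        have h := hPder (m + 2) x
        push_cast at h
        rw [h]
        have hm0 : (0:ℝ) ≤ (m:ℝ) := Nat.cast_nonneg m
        have hb : (0:ℝ) < (m:ℝ) + 2 + 1 + 2 * l := by linarith
        have hc : (0:ℝ) < (m:ℝ) + 2 + 2 + 2 * l := by linarith
        have hd1 : (0:ℝ) < ((m:ℝ) + 2 + 1 + 2 * l) ^ 2 * ((m:ℝ) + 2 + 2 + 2 * l) * ((m:ℝ) + 2 + 1) := by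
          exact mul_pos (mul_pos (pow_pos hb 2) hc) (by linarith)
        have hcA : (0:ℝ) < 2 * ((m:ℝ) + 2 + 1 + l) / (((m:ℝ) + 2 + 1 + 2 * l) ^ 2 * ((m:ℝ) + 2 + 2 + 2 * l) * ((m:ℝ) + 2 + 1)) :=
          div_pos (by linarith) hd1
        have hcB : (0:ℝ) < ((m:ℝ) + 2 + 1) * ((m:ℝ) + 2) / (((m:ℝ) + 2 + 1 + 2 * l) * ((m:ℝ) + 2 + 2 + 2 * l)) :=
          div_pos (mul_pos (by linarith) (by linarith)) (mul_pos hb hc)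
        have hIH := ih1 x hx
        nlinarith [mul_pos hcB hIH,
          mul_nonneg (mul_nonneg (mul_nonneg hl2.le hx.le) hcA.le)
            (sq_nonneg ((derivative (p (m + 2 + 1))).eval x))]
    intro m
    exact (key m).1
  -- final assembly
  obtain ⟨k, rfl⟩ : ∃ k, n = k + 2 := ⟨n - 2, by omega⟩
  have hphiP : (1 - X ^ 2) * φ = (1 - X ^ 2) * Phi l p (k + 2) := by
    refine Polynomial.funext fun x => ?_
    simp only [eval_mul, eval_sub, eval_one, eval_pow, eval_X]
    have h1 := hφ x
    have h2 := hPhiId (k + 1) x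
    simp only [show k + 1 + 1 = k + 2 from rfl, show k + 1 + 2 = k + 3 from rfl,
      show k + 2 - 1 = k + 1 from rfl, show k + 2 + 1 = k + 3 from rfl] at h1 h2
    rw [h1, ← h2]
  have hphi : φ = Phi l p (k + 2) := mul_left_cancel₀ hOneX2 hphiP
  intro x hx
  rw [hphi]
  exact hPhiD k x hx
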